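/- Let G_k denote the complete rooted planar 3-tree of depth k (G_0 is a triangle; G_k has each of its three children equal to a copy of G_{k−1}). Let C = v1v2v3 bound the outer face and precolor ψ(v_i) = i for i ∈ {1,2,3}. Then in every extension of ψ to a 3-coloring of G_k (colors {1,2,3}), the sum of the sizes of the clusters containing v1, v2, and v3 is at least k + 3; hence every such coloring has clustering at least k/3 + 1. -/

import Mathlib

/-- `CRP3T G k S a b c`: `S` carries (inside `G`) the complete rooted planar 3-tree `G_k` of
depth `k` with outer triangle `a b c`: for `k = 0` it is a triangle, and for `k+1` a tip `v`
is joined to the outer triangle and each of the three resulting triangles carries a copy of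
`G_k`, overlapping only in shared triangle vertices and with no edges between interiors. -/
inductive CRP3T {V : Type*} (G : SimpleGraph V) : ℕ → Set V → V → V → V → Prop
  | base : ∀ a b c : V, a ≠ b → a ≠ c → b ≠ c → G.Adj a b → G.Adj a c → G.Adj b c →
      CRP3T G 0 {a, b, c} a b c
  | step : ∀ (k : ℕ) (S S₁ S₂ S₃ : Set V) (a b c v : V),
      v ∉ ({a, b, c} : Set V) →
      G.Adj v a → G.Adj v b → G.Adj v c →
      CRP3T G k S₁ a b v → CRP3T G k S₂ a c v → CRP3T G k S₃ b c v →
      S = S₁ ∪ S₂ ∪ S₃ →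
      S₁ ∩ S₂ = {a, v} → S₁ ∩ S₃ = {b, v} → S₂ ∩ S₃ = {c, v} →
      (∀ x ∈ S₁, ∀ y ∈ S₂, x ∉ S₂ → y ∉ S₁ → ¬ G.Adj x y) →
      (∀ x ∈ S₁, ∀ y ∈ S₃, x ∉ S₃ → y ∉ S₁ → ¬ G.Adj x y) →
      (∀ x ∈ S₂, ∀ y ∈ S₃, x ∉ S₃ → y ∉ S₂ → ¬ G.Adj x y) →
      CRP3T G (k + 1) S a b c

/-- `T` is a cluster of the coloring `φ` within `S`: a maximal monochromatic set inducing a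
connected subgraph. -/
def IsClusterIn {V : Type*} (G : SimpleGraph V) (φ : V → Fin 3) (S T : Set V) : Prop :=
  T ⊆ S ∧ (∀ u ∈ T, ∀ v ∈ T, φ u = φ v) ∧ (G.induce T).Connected ∧
    ∀ T' : Set V, T ⊆ T' → T' ⊆ S → (∀ u ∈ T', ∀ v ∈ T', φ u = φ v) →
      (G.induce T').Connected → T' = T

section Aux

variable {V : Type*}

/-- The monochromatic graph restricted to `S`. -/
def monoRes (G : SimpleGraph V) (φ : V → Fin 3) (S : Set V) : SimpleGraph V where
  Adj x y := G.Adj x y ∧ φ x = φ y ∧ x ∈ S ∧ y ∈ S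
  symm := ⟨fun _ _ ⟨h1, h2, h3, h4⟩ => ⟨h1.symm, h2.symm, h4, h3⟩⟩
  loopless := ⟨fun x h => G.loopless.irrefl x h.1⟩

def mcomp (G : SimpleGraph V) (φ : V → Fin 3) (S : Set V) (x : V) : Set V :=
  {y | (monoRes G φ S).Reachable x y}

lemma mem_mcomp_self (G : SimpleGraph V) (φ : V → Fin 3) (S : Set V) (x : V) :
    x ∈ mcomp G φ S x := SimpleGraph.Reachable.refl x

lemma monoRes_walk_prop {G : SimpleGraph V} {φ : V → Fin 3} {S : Set V} :
    ∀ {x y : V}, (monoRes G φ S).Walk x y → φ x = φ y ∧ (x = y ∨ (x ∈ S ∧ y ∈ S)) := by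
  intro x y w
  induction w with
  | nil => exact ⟨rfl, Or.inl rfl⟩
  | cons h p ih =>
    obtain ⟨hadj, hcol, hx, hu⟩ := h
    refine ⟨hcol.trans ih.1, Or.inr ⟨hx, ?_⟩⟩
    rcases ih.2 with rfl | ⟨_, hy⟩
    · exact hu
    · exact hy

lemma mcomp_color {G : SimpleGraph V} {φ : V → Fin 3} {S : Set V} {x y : V}
    (hy : y ∈ mcomp G φ S x) : φ x = φ y := by
  obtain ⟨w⟩ := hy
  exact (monoRes_walk_prop w).1

lemma mcomp_subset {G : SimpleGraph V} {φ : V → Fin 3} {S : Set V} {x : V}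
    (hx : x ∈ S) : mcomp G φ S x ⊆ S := by
  intro y hy
  obtain ⟨w⟩ := hy
  rcases (monoRes_walk_prop w).2 with rfl | ⟨_, h⟩
  · exact hx
  · exact h

lemma mcomp_mono {G : SimpleGraph V} {φ : V → Fin 3} {S S' : Set V} (hSS : S ⊆ S') (x : V) :
    mcomp G φ S x ⊆ mcomp G φ S' x := by
  intro y hy
  refine SimpleGraph.Reachable.mono (fun u v h => ?_) hy
  exact ⟨h.1, h.2.1, hSS h.2.2.1, hSS h.2.2.2⟩

lemma mcomp_eq_of_reachable {G : SimpleGraph V} {φ : V → Fin 3} {S : Set V} {x y : V}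
    (h : (monoRes G φ S).Reachable x y) : mcomp G φ S x = mcomp G φ S y := by
  ext z
  exact ⟨fun hz => h.symm.trans hz, fun hz => h.trans hz⟩

lemma mcomp_reach_induce {G : SimpleGraph V} {φ : V → Fin 3} {S : Set V} {x : V} :
    ∀ {y z : V} (w : (monoRes G φ S).Walk y z) (hy : y ∈ mcomp G φ S x),
      (G.induce (mcomp G φ S x)).Reachable ⟨y, hy⟩ ⟨z, hy.trans w.reachable⟩ := by
  intro y z w
  induction w with
  | nil => intro hy; rfl
  | @cons y u z h p ih =>
    intro hy
    have hu : u ∈ mcomp G φ S x := hy.trans (SimpleGraph.Adj.reachable h)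
    have h1 : (G.induce (mcomp G φ S x)).Adj ⟨y, hy⟩ ⟨u, hu⟩ := h.1
    refine (h1.reachable.trans ?_)
    have := ih hu
    convert this using 2

lemma mcomp_connected {G : SimpleGraph V} {φ : V → Fin 3} {S : Set V} (x : V) :
    (G.induce (mcomp G φ S x)).Connected := by
  haveI : Nonempty (mcomp G φ S x) := ⟨⟨x, mem_mcomp_self G φ S x⟩⟩
  refine SimpleGraph.Connected.mk (fun u v => ?_)
  obtain ⟨u, hu⟩ := u
  obtain ⟨v, hv⟩ := v
  obtain ⟨wu⟩ := hu
  obtain ⟨wv⟩ := hv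
  have h1 := mcomp_reach_induce (x := x) wu (mem_mcomp_self G φ S x)
  have h2 := mcomp_reach_induce (x := x) wv (mem_mcomp_self G φ S x)
  have h3 := h1.symm.trans h2
  convert h3 using 2

lemma induce_walk_reach {G : SimpleGraph V} {φ : V → Fin 3} {S T : Set V}
    (hTS : T ⊆ S) (hmono : ∀ u ∈ T, ∀ v ∈ T, φ u = φ v) :
    ∀ {u v : {a // a ∈ T}}, (G.induce T).Walk u v → (monoRes G φ S).Reachable u.val v.val := by
  intro u v w
  induction w with
  | nil => rfl
  | @cons p q r h _ ih =>
    have hadj : (monoRes G φ S).Adj p.val q.val :=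
      ⟨h, hmono p.val p.2 q.val q.2, hTS p.2, hTS q.2⟩
    exact hadj.reachable.trans ih

/-- A cluster containing `x` is exactly the monochromatic component of `x`. -/
lemma cluster_eq_mcomp {G : SimpleGraph V} {φ : V → Fin 3} {S T : Set V} {x : V}
    (hT : IsClusterIn G φ S T) (hx : x ∈ T) : T = mcomp G φ S x := by
  obtain ⟨hTS, hmono, hconn, hmax⟩ := hT
  have hxS : x ∈ S := hTS hx
  have hsub : T ⊆ mcomp G φ S x := by
    intro y hy
    obtain ⟨w⟩ := hconn ⟨x, hx⟩ ⟨y, hy⟩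
    exact induce_walk_reach hTS hmono w
  have := hmax (mcomp G φ S x) hsub (mcomp_subset hxS)
    (fun u hu v hv => (mcomp_color hu).symm.trans (mcomp_color hv))
    (mcomp_connected x)
  exact this.symm

lemma crp3t_mem {G : SimpleGraph V} :
    ∀ {k S a b c}, CRP3T G k S a b c → a ∈ S ∧ b ∈ S ∧ c ∈ S := by
  intro k S a b c h
  induction h with
  | base a b c => exact ⟨Or.inl rfl, Or.inr (Or.inl rfl), Or.inr (Or.inr rfl)⟩
  | step k S S₁ S₂ S₃ a b c v hv hva hvb hvc h₁ h₂ h₃ hS h12 h13 h23 e12 e13 e23 ih1 ih2 ih3 =>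
    subst hS
    exact ⟨Or.inl (Or.inl ih1.1), Or.inl (Or.inl ih1.2.1), Or.inl (Or.inr ih2.2.1)⟩

lemma crp3t_ne {G : SimpleGraph V} :
    ∀ {k S a b c}, CRP3T G k S a b c → a ≠ b ∧ a ≠ c ∧ b ≠ c := by
  intro k S a b c h
  induction h with
  | base a b c hab hac hbc => exact ⟨hab, hac, hbc⟩
  | step k S S₁ S₂ S₃ a b c v hv hva hvb hvc h₁ h₂ h₃ hS h12 h13 h23 e12 e13 e23 ih1 ih2 ih3 =>
    exact ⟨ih1.1, ih2.1, ih3.1⟩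

lemma fin3_cases : ∀ x y z w : Fin 3, x ≠ y → x ≠ z → y ≠ z → w = x ∨ w = y ∨ w = z := by
  decide

lemma key_sum {V : Type*} [Fintype V] {G : SimpleGraph V} :
    ∀ {k : ℕ} {S : Set V} {a b c : V}, CRP3T G k S a b c →
      ∀ φ : V → Fin 3, φ a ≠ φ b → φ a ≠ φ c → φ b ≠ φ c →
      k + 3 ≤ (mcomp G φ S a).ncard + (mcomp G φ S b).ncard + (mcomp G φ S c).ncard := by
  intro k S a b c h
  induction h with
  | base a b c hab hac hbc _ _ _ =>
    intro φ _ _ _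
    have h1 : ∀ x : V, 1 ≤ (mcomp G φ ({a,b,c} : Set V) x).ncard := fun x =>
      (Set.ncard_pos (Set.toFinite _)).mpr ⟨x, mem_mcomp_self _ _ _ _⟩
    have := h1 a; have := h1 b; have := h1 c
    omega
  | step k S S₁ S₂ S₃ a b c v hv hva hvb hvc h₁ h₂ h₃ hS h12 h13 h23 e12 e13 e23 ih1 ih2 ih3 =>
    intro φ hab hac hbc
    have hne := crp3t_ne h₁
    have hab' : a ≠ b := hne.1
    have hne2 := crp3t_ne h₂
    have hne3' := crp3t_ne h₃
    have hne3 : a ≠ c := hne2.1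
    have hne4 : b ≠ c := hne3'.1
    have hva' : a ≠ v := fun e => hv (by rw [← e]; exact Or.inl rfl)
    have hvb' : b ≠ v := fun e => hv (by rw [← e]; exact Or.inr (Or.inl rfl))
    have hvc' : c ≠ v := fun e => hv (by rw [← e]; exact Or.inr (Or.inr rfl))
    have hS1 : S₁ ⊆ S := by subst hS; intro x hx; exact Or.inl (Or.inl hx)
    have hS2 : S₂ ⊆ S := by subst hS; intro x hx; exact Or.inl (Or.inr hx)
    have hS3 : S₃ ⊆ S := by subst hS; intro x hx; exact Or.inr hx
    have haS : a ∈ S := hS1 (crp3t_mem h₁).1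
    have hbS : b ∈ S := hS1 (crp3t_mem h₁).2.1
    have hcS : c ∈ S := hS2 (crp3t_mem h₂).2.1
    have hvS : v ∈ S := hS1 (crp3t_mem h₁).2.2
    -- ncard monotone facts
    have nmono : ∀ (A B : Set V), A ⊆ B → A.ncard ≤ B.ncard := fun A B hAB =>
      Set.ncard_le_ncard hAB (Set.toFinite _)
    rcases fin3_cases (φ a) (φ b) (φ c) (φ v) hab hac hbc with hcol | hcol | hcol
    · -- tip colored like a; use S₃ with triangle b c v
      have IH := ih3 φ hbc (by rw [hcol]; exact hab.symm) (by rw [hcol]; exact hac.symm)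
      -- comp_S a = comp_S v ⊇ insert a (comp_{S₃} v)
      have hreach : (monoRes G φ S).Reachable a v :=
        SimpleGraph.Adj.reachable ⟨hva.symm, hcol.symm, haS, hvS⟩
      have heq : mcomp G φ S a = mcomp G φ S v := mcomp_eq_of_reachable hreach
      have haS3 : a ∉ S₃ := by
        intro haS3
        have : a ∈ S₁ ∩ S₃ := ⟨(crp3t_mem h₁).1, haS3⟩
        rw [h13] at this
        rcases this with e | e
        · exact hab' e
        · exact hva' e
      have hsub : insert a (mcomp G φ S₃ v) ⊆ mcomp G φ S a := by
        intro y hy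
        rcases hy with rfl | hy
        · exact mem_mcomp_self _ _ _ _
        · rw [heq]; exact mcomp_mono hS3 v hy
      have hanotin : a ∉ mcomp G φ S₃ v := fun ha =>
        haS3 (mcomp_subset (crp3t_mem h₃).2.2 ha)
      have hcard : (mcomp G φ S₃ v).ncard + 1 ≤ (mcomp G φ S a).ncard := by
        have := nmono _ _ hsub
        rwa [Set.ncard_insert_of_notMem hanotin (Set.toFinite _)] at this
      have hmb := nmono _ _ (mcomp_mono (G:=G) (φ:=φ) hS3 b)
      have hmc := nmono _ _ (mcomp_mono (G:=G) (φ:=φ) hS3 c)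
      omega
    · -- tip colored like b; use S₂ with triangle a c v
      have IH := ih2 φ hac (by rw [hcol]; exact hab) (by rw [hcol]; exact hbc.symm)
      have hreach : (monoRes G φ S).Reachable b v :=
        SimpleGraph.Adj.reachable ⟨hvb.symm, hcol.symm, hbS, hvS⟩
      have heq : mcomp G φ S b = mcomp G φ S v := mcomp_eq_of_reachable hreach
      have hbS2 : b ∉ S₂ := by
        intro hbS2
        have : b ∈ S₁ ∩ S₂ := ⟨(crp3t_mem h₁).2.1, hbS2⟩
        rw [h12] at this
        rcases this with e | e
        · exact hab' e.symm
        · exact hvb' e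
      have hsub : insert b (mcomp G φ S₂ v) ⊆ mcomp G φ S b := by
        intro y hy
        rcases hy with rfl | hy
        · exact mem_mcomp_self _ _ _ _
        · rw [heq]; exact mcomp_mono hS2 v hy
      have hbnotin : b ∉ mcomp G φ S₂ v := fun hb =>
        hbS2 (mcomp_subset (crp3t_mem h₂).2.2 hb)
      have hcard : (mcomp G φ S₂ v).ncard + 1 ≤ (mcomp G φ S b).ncard := by
        have := nmono _ _ hsub
        rwa [Set.ncard_insert_of_notMem hbnotin (Set.toFinite _)] at this
      have hma := nmono _ _ (mcomp_mono (G:=G) (φ:=φ) hS2 a)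
      have hmc := nmono _ _ (mcomp_mono (G:=G) (φ:=φ) hS2 c)
      omega
    · -- tip colored like c; use S₁ with triangle a b v
      have IH := ih1 φ hab (by rw [hcol]; exact hac) (by rw [hcol]; exact hbc)
      have hreach : (monoRes G φ S).Reachable c v :=
        SimpleGraph.Adj.reachable ⟨hvc.symm, hcol.symm, hcS, hvS⟩
      have heq : mcomp G φ S c = mcomp G φ S v := mcomp_eq_of_reachable hreach
      have hcS1 : c ∉ S₁ := by
        intro hcS1
        have : c ∈ S₁ ∩ S₂ := ⟨hcS1, (crp3t_mem h₂).2.1⟩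
        rw [h12] at this
        rcases this with e | e
        · exact hne3 e.symm
        · exact hvc' e
      have hsub : insert c (mcomp G φ S₁ v) ⊆ mcomp G φ S c := by
        intro y hy
        rcases hy with rfl | hy
        · exact mem_mcomp_self _ _ _ _
        · rw [heq]; exact mcomp_mono hS1 v hy
      have hcnotin : c ∉ mcomp G φ S₁ v := fun hcmem =>
        hcS1 (mcomp_subset (crp3t_mem h₁).2.2 hcmem)
      have hcard : (mcomp G φ S₁ v).ncard + 1 ≤ (mcomp G φ S c).ncard := by
        have := nmono _ _ hsub
        rwa [Set.ncard_insert_of_notMem hcnotin (Set.toFinite _)] at this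
      have hma := nmono _ _ (mcomp_mono (G:=G) (φ:=φ) hS1 a)
      have hmb := nmono _ _ (mcomp_mono (G:=G) (φ:=φ) hS1 b)
      omega

end Aux

/-- In every 3-coloring of the complete rooted planar 3-tree of depth `k` giving the outer
triangle three distinct colors, the sizes of the clusters of the three outer vertices sum to
at least `k + 3`; hence some cluster has size at least `k/3 + 1`. -/
theorem stmt15 {V : Type*} [Fintype V] (G : SimpleGraph V) (k : ℕ) (S : Set V)
    (a b c : V) (h : CRP3T G k S a b c)
    (φ : V → Fin 3) (ha : φ a = 0) (hb : φ b = 1) (hc : φ c = 2) :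
    (∀ T₁ T₂ T₃ : Set V, IsClusterIn G φ S T₁ → IsClusterIn G φ S T₂ →
      IsClusterIn G φ S T₃ → a ∈ T₁ → b ∈ T₂ → c ∈ T₃ →
      k + 3 ≤ T₁.ncard + T₂.ncard + T₃.ncard) ∧
    ∃ T : Set V, T ⊆ S ∧ (∀ u ∈ T, ∀ v ∈ T, φ u = φ v) ∧ (G.induce T).Connected ∧
      k + 3 ≤ 3 * T.ncard := by
  have hab : φ a ≠ φ b := by rw [ha, hb]; decide
  have hac : φ a ≠ φ c := by rw [ha, hc]; decide
  have hbc : φ b ≠ φ c := by rw [hb, hc]; decide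
  have hkey := key_sum h φ hab hac hbc
  have hmem := crp3t_mem h
  constructor
  · intro T₁ T₂ T₃ h₁ h₂ h₃ ha₁ hb₂ hc₃
    rw [cluster_eq_mcomp h₁ ha₁, cluster_eq_mcomp h₂ hb₂, cluster_eq_mcomp h₃ hc₃]
    exact hkey
  · have := hkey
    have key3 : k + 3 ≤ 3 * (mcomp G φ S a).ncard ∨ k + 3 ≤ 3 * (mcomp G φ S b).ncard ∨
        k + 3 ≤ 3 * (mcomp G φ S c).ncard := by omega
    rcases key3 with hk | hk | hk
    · exact ⟨mcomp G φ S a, mcomp_subset hmem.1,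
        fun u hu v hv => (mcomp_color hu).symm.trans (mcomp_color hv),
        mcomp_connected a, hk⟩
    · exact ⟨mcomp G φ S b, mcomp_subset hmem.2.1,
        fun u hu v hv => (mcomp_color hu).symm.trans (mcomp_color hv),
        mcomp_connected b, hk⟩
    · exact ⟨mcomp G φ S c, mcomp_subset hmem.2.2,
        fun u hu v hv => (mcomp_color hu).symm.trans (mcomp_color hv),
        mcomp_connected c, hk⟩
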